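/- Let p ≠ q be primes and n, m positive integers with n ≡ 2 or 4 (mod 6) and m ≡ 0, 2, or 4 (mod 6). Then the number of triples (A,B,C) of positive integers with A ≤ B ≤ C and A·B·C = p^n·q^m equals (n+2)(m+2)(nm+n+m+4)/24. -/

import Mathlib

/-- Number of cuboids with integer edge lengths and volume `N`. -/
noncomputable def cuboidCount (N : ℕ) : ℕ :=
  Set.ncard {t : ℕ × ℕ × ℕ | 0 < t.1 ∧ t.1 ≤ t.2.1 ∧ t.2.1 ≤ t.2.2 ∧ t.1 * t.2.1 * t.2.2 = N}

def sort3 (t : ℕ × ℕ × ℕ) : ℕ × ℕ × ℕ :=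
  if t.1 ≤ t.2.1 then
    if t.2.1 ≤ t.2.2 then t
    else if t.1 ≤ t.2.2 then (t.1, t.2.2, t.2.1)
    else (t.2.2, t.1, t.2.1)
  else
    if t.1 ≤ t.2.2 then (t.2.1, t.1, t.2.2)
    else if t.2.1 ≤ t.2.2 then (t.2.1, t.2.2, t.1)
    else (t.2.2, t.2.1, t.1)

lemma sort3_sorted (t : ℕ × ℕ × ℕ) :
    (sort3 t).1 ≤ (sort3 t).2.1 ∧ (sort3 t).2.1 ≤ (sort3 t).2.2 := by
  unfold sort3; split_ifs <;> (try dsimp) <;> omega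

lemma sort3_mul (t : ℕ × ℕ × ℕ) :
    (sort3 t).1 * (sort3 t).2.1 * (sort3 t).2.2 = t.1 * t.2.1 * t.2.2 := by
  unfold sort3; split_ifs <;> (try dsimp) <;> ring

lemma sort3_eq_iff {a b c x y z : ℕ} (hab : a ≤ b) (hbc : b ≤ c) :
    sort3 (x, y, z) = (a, b, c) ↔
      ((x = a ∧ y = b ∧ z = c) ∨ (x = a ∧ y = c ∧ z = b) ∨ (x = b ∧ y = a ∧ z = c) ∨
        (x = b ∧ y = c ∧ z = a) ∨ (x = c ∧ y = a ∧ z = b) ∨ (x = c ∧ y = b ∧ z = a)) := by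
  unfold sort3; dsimp only; split_ifs <;> simp [Prod.ext_iff] <;> omega

def Tfin (N : ℕ) : Finset (ℕ × ℕ × ℕ) :=
  (N.divisors ×ˢ N.divisors ×ˢ N.divisors).filter (fun t => t.1 * t.2.1 * t.2.2 = N)

def Ffin (N : ℕ) : Finset (ℕ × ℕ × ℕ) := (Tfin N).filter (fun t => t.1 = t.2.1)

def Sfin (N : ℕ) : Finset (ℕ × ℕ × ℕ) := (Tfin N).filter (fun t => t.1 ≤ t.2.1 ∧ t.2.1 ≤ t.2.2)

lemma mem_Tfin {N : ℕ} (hN : N ≠ 0) {t : ℕ × ℕ × ℕ} :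
    t ∈ Tfin N ↔ t.1 * t.2.1 * t.2.2 = N := by
  unfold Tfin
  simp only [Finset.mem_filter, Finset.mem_product, Nat.mem_divisors]
  refine ⟨fun h => h.2, fun h => ⟨⟨⟨⟨t.2.1 * t.2.2, by rw [← h]; ring⟩, hN⟩,
    ⟨⟨t.1 * t.2.2, by rw [← h]; ring⟩, hN⟩, ⟨t.1 * t.2.1, by rw [← h]; ring⟩, hN⟩, h⟩⟩

lemma fiber_count {N : ℕ} (hN : N ≠ 0) (hcube : ∀ x : ℕ, x * x * x ≠ N)
    {a b c : ℕ} (hab : a ≤ b) (hbc : b ≤ c) (habc : a * b * c = N) :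
    ((Tfin N).filter (fun t => sort3 t = (a, b, c))).card
      + 3 * ((Ffin N).filter (fun t => sort3 t = (a, b, c))).card = 6 := by
  have hT : ∀ x y z : ℕ, (x, y, z) ∈ Tfin N ↔ x * y * z = N := fun x y z => mem_Tfin hN
  have hmemT : ∀ x y z : ℕ, ((x, y, z) ∈ (Tfin N).filter (fun t => sort3 t = (a, b, c))) ↔
      ((x = a ∧ y = b ∧ z = c) ∨ (x = a ∧ y = c ∧ z = b) ∨ (x = b ∧ y = a ∧ z = c) ∨
        (x = b ∧ y = c ∧ z = a) ∨ (x = c ∧ y = a ∧ z = b) ∨ (x = c ∧ y = b ∧ z = a)) := by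
    intro x y z
    rw [Finset.mem_filter, hT, sort3_eq_iff hab hbc]
    constructor
    · exact fun h => h.2
    · intro h
      refine ⟨?_, h⟩
      rcases h with ⟨rfl, rfl, rfl⟩ | ⟨rfl, rfl, rfl⟩ | ⟨rfl, rfl, rfl⟩ | ⟨rfl, rfl, rfl⟩ |
        ⟨rfl, rfl, rfl⟩ | ⟨rfl, rfl, rfl⟩ <;> rw [← habc] <;> ring
  have hmemF : ∀ x y z : ℕ, ((x, y, z) ∈ (Ffin N).filter (fun t => sort3 t = (a, b, c))) ↔
      (x = y ∧ ((x = a ∧ y = b ∧ z = c) ∨ (x = a ∧ y = c ∧ z = b) ∨ (x = b ∧ y = a ∧ z = c) ∨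
        (x = b ∧ y = c ∧ z = a) ∨ (x = c ∧ y = a ∧ z = b) ∨ (x = c ∧ y = b ∧ z = a))) := by
    intro x y z
    unfold Ffin
    rw [Finset.filter_filter, Finset.mem_filter, hT, sort3_eq_iff hab hbc]
    constructor
    · exact fun h => ⟨h.2.1, h.2.2⟩
    · intro ⟨h1, h⟩
      refine ⟨?_, h1, h⟩
      rcases h with ⟨rfl, rfl, rfl⟩ | ⟨rfl, rfl, rfl⟩ | ⟨rfl, rfl, rfl⟩ | ⟨rfl, rfl, rfl⟩ |
        ⟨rfl, rfl, rfl⟩ | ⟨rfl, rfl, rfl⟩ <;> rw [← habc] <;> ring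
  have hne : ¬(a = b ∧ b = c) := by
    rintro ⟨rfl, rfl⟩; exact hcube a habc
  rcases eq_or_lt_of_le hab with rfl | h1 <;> rcases eq_or_lt_of_le hbc with rfl | h2
  · exact absurd ⟨rfl, rfl⟩ hne
  · have e1 : (Tfin N).filter (fun t => sort3 t = (a, a, c)) =
        {(a, a, c), (a, c, a), (c, a, a)} := by
      ext ⟨x, y, z⟩
      rw [hmemT]
      simp [Prod.ext_iff]; try omega
    have e2 : (Ffin N).filter (fun t => sort3 t = (a, a, c)) = {(a, a, c)} := by
      ext ⟨x, y, z⟩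
      rw [hmemF]
      simp [Prod.ext_iff]; try omega
    rw [e1, e2]
    rw [Finset.card_insert_of_notMem (by simp [Prod.ext_iff]; try omega),
      Finset.card_insert_of_notMem (by simp [Prod.ext_iff]; try omega)]
    simp
  · have e1 : (Tfin N).filter (fun t => sort3 t = (a, b, b)) =
        {(a, b, b), (b, a, b), (b, b, a)} := by
      ext ⟨x, y, z⟩
      rw [hmemT]
      simp [Prod.ext_iff]; try omega
    have e2 : (Ffin N).filter (fun t => sort3 t = (a, b, b)) = {(b, b, a)} := by
      ext ⟨x, y, z⟩
      rw [hmemF]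
      simp [Prod.ext_iff]; try omega
    rw [e1, e2]
    rw [Finset.card_insert_of_notMem (by simp [Prod.ext_iff]; try omega),
      Finset.card_insert_of_notMem (by simp [Prod.ext_iff]; try omega)]
    simp
  · have e1 : (Tfin N).filter (fun t => sort3 t = (a, b, c)) =
        {(a, b, c), (a, c, b), (b, a, c), (b, c, a), (c, a, b), (c, b, a)} := by
      ext ⟨x, y, z⟩
      rw [hmemT]
      simp [Prod.ext_iff]; try omega
    have e2 : (Ffin N).filter (fun t => sort3 t = (a, b, c)) = ∅ := by
      ext ⟨x, y, z⟩
      rw [hmemF]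
      simp [Prod.ext_iff]; try omega
    rw [e1, e2]
    rw [Finset.card_insert_of_notMem (by simp [Prod.ext_iff]; try omega),
      Finset.card_insert_of_notMem (by simp [Prod.ext_iff]; try omega),
      Finset.card_insert_of_notMem (by simp [Prod.ext_iff]; try omega),
      Finset.card_insert_of_notMem (by simp [Prod.ext_iff]; try omega),
      Finset.card_insert_of_notMem (by simp [Prod.ext_iff]; try omega)]
    simp

lemma burnside {N : ℕ} (hN : N ≠ 0) (hcube : ∀ x : ℕ, x * x * x ≠ N) :
    (Tfin N).card + 3 * (Ffin N).card = 6 * (Sfin N).card := by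
  have hmap : ∀ t ∈ Tfin N, sort3 t ∈ Sfin N := by
    intro t ht
    have h := (mem_Tfin hN).mp ht
    unfold Sfin
    rw [Finset.mem_filter, mem_Tfin hN, sort3_mul]
    exact ⟨h, sort3_sorted t⟩
  have hmapF : ∀ t ∈ Ffin N, sort3 t ∈ Sfin N := by
    intro t ht
    exact hmap t (Finset.mem_filter.mp ht).1
  rw [Finset.card_eq_sum_card_fiberwise hmap, Finset.card_eq_sum_card_fiberwise hmapF,
    Finset.mul_sum, ← Finset.sum_add_distrib]
  have : ∀ s ∈ Sfin N, ((Tfin N).filter (fun t => sort3 t = s)).card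
      + 3 * ((Ffin N).filter (fun t => sort3 t = s)).card = 6 := by
    rintro ⟨a, b, c⟩ hs
    unfold Sfin at hs
    rw [Finset.mem_filter, mem_Tfin hN] at hs
    exact fiber_count hN hcube hs.2.1 hs.2.2 hs.1
  rw [Finset.sum_congr rfl this, Finset.sum_const, smul_eq_mul, mul_comm]

section
variable {p q : ℕ} (hp : p.Prime) (hq : q.Prime) (hpq : p ≠ q)

include hp hq in
lemma dvd_struct {n m A : ℕ} (h : A ∣ p ^ n * q ^ m) :
    ∃ i ≤ n, ∃ j ≤ m, A = p ^ i * q ^ j := by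
  obtain ⟨y, z, hy, hz, rfl⟩ := Nat.dvd_mul.mp h
  obtain ⟨i, hi, rfl⟩ := (Nat.dvd_prime_pow hp).mp hy
  obtain ⟨j, hj, rfl⟩ := (Nat.dvd_prime_pow hq).mp hz
  exact ⟨i, hi, j, hj, rfl⟩

include hp hq hpq in
lemma fact_pp (i j : ℕ) : (p ^ i * q ^ j).factorization p = i := by
  rw [Nat.factorization_mul (pow_ne_zero _ hp.pos.ne') (pow_ne_zero _ hq.pos.ne'),
    hp.factorization_pow, hq.factorization_pow]
  rw [Finsupp.add_apply, Finsupp.single_apply, Finsupp.single_apply]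
  simp [hpq, Ne.symm hpq]

include hp hq hpq in
lemma fact_pq (i j : ℕ) : (p ^ i * q ^ j).factorization q = j := by
  rw [Nat.factorization_mul (pow_ne_zero _ hp.pos.ne') (pow_ne_zero _ hq.pos.ne'),
    hp.factorization_pow, hq.factorization_pow]
  rw [Finsupp.add_apply, Finsupp.single_apply, Finsupp.single_apply]
  simp [hpq, Ne.symm hpq]

include hp hq hpq in
lemma eq_exponents {n m I J : ℕ} (h : p ^ I * q ^ J = p ^ n * q ^ m) : I = n ∧ J = m := by
  constructor
  · have h1 := fact_pp hp hq hpq I J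
    have h2 := fact_pp hp hq hpq n m
    rw [h] at h1; omega
  · have h1 := fact_pq hp hq hpq I J
    have h2 := fact_pq hp hq hpq n m
    rw [h] at h1; omega

include hp hq hpq in
lemma pow_le_left {n m k : ℕ} (h : p ^ k ∣ p ^ n * q ^ m) : k ≤ n := by
  have hc : Nat.Coprime (p ^ k) (q ^ m) :=
    (((Nat.coprime_primes hp hq).mpr hpq).pow_right m).pow_left k
  exact (Nat.pow_dvd_pow_iff_le_right hp.one_lt).mp (hc.dvd_of_dvd_mul_right h)

include hp hq hpq in
lemma pow_le_right {n m k : ℕ} (h : q ^ k ∣ p ^ n * q ^ m) : k ≤ m := by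
  rw [mul_comm] at h
  exact pow_le_left hq hp (Ne.symm hpq) h

include hp hq hpq in
lemma Tcard (n m : ℕ) :
    (Tfin (p ^ n * q ^ m)).card =
      (((Finset.range (n + 1) ×ˢ Finset.range (n + 1)).filter (fun x => x.1 + x.2 ≤ n)) ×ˢ
        ((Finset.range (m + 1) ×ˢ Finset.range (m + 1)).filter (fun x => x.1 + x.2 ≤ m))).card := by
  have hN : p ^ n * q ^ m ≠ 0 :=
    Nat.mul_ne_zero (pow_ne_zero _ hp.pos.ne') (pow_ne_zero _ hq.pos.ne')
  apply Finset.card_nbij'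
    (fun t => ((t.1.factorization p, t.2.1.factorization p),
      (t.1.factorization q, t.2.1.factorization q)))
    (fun x => (p ^ x.1.1 * q ^ x.2.1, p ^ x.1.2 * q ^ x.2.2,
      p ^ (n - x.1.1 - x.1.2) * q ^ (m - x.2.1 - x.2.2)))
  · rintro ⟨t1, t2, t3⟩ ht
    rw [Finset.mem_coe, mem_Tfin hN] at ht
    dsimp only at ht ⊢
    have d1 : t1 ∣ p ^ n * q ^ m := ⟨t2 * t3, by rw [← ht]; ring⟩
    have d2 : t2 ∣ p ^ n * q ^ m := ⟨t1 * t3, by rw [← ht]; ring⟩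
    obtain ⟨i1, hi1, j1, hj1, rfl⟩ := dvd_struct hp hq d1
    obtain ⟨i2, hi2, j2, hj2, rfl⟩ := dvd_struct hp hq d2
    have hdp : p ^ (i1 + i2) ∣ p ^ n * q ^ m := by
      refine dvd_trans ?_ ⟨t3, by rw [← ht]; try ring⟩
      rw [pow_add]
      exact mul_dvd_mul (dvd_mul_right _ _) (dvd_mul_right _ _)
    have hdq : q ^ (j1 + j2) ∣ p ^ n * q ^ m := by
      refine dvd_trans ?_ ⟨t3, by rw [← ht]; try ring⟩
      rw [pow_add]
      calc q ^ j1 * q ^ j2 ∣ (p ^ i1 * q ^ j1) * (p ^ i2 * q ^ j2) :=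
            mul_dvd_mul (dvd_mul_left _ _) (dvd_mul_left _ _)
        _ ∣ _ := dvd_rfl
    have h1 := pow_le_left hp hq hpq hdp
    have h2 := pow_le_right hp hq hpq hdq
    simp only [Finset.mem_coe, Finset.mem_product, Finset.mem_filter, Finset.mem_range,
      fact_pp hp hq hpq, fact_pq hp hq hpq]
    omega
  · rintro ⟨⟨i1, i2⟩, j1, j2⟩ hx
    simp only [Finset.mem_coe, Finset.mem_product, Finset.mem_filter, Finset.mem_range] at hx
    rw [Finset.mem_coe, mem_Tfin hN]
    dsimp only
    have e1 : i1 + i2 + (n - i1 - i2) = n := by omega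
    have e2 : j1 + j2 + (m - j1 - j2) = m := by omega
    calc p ^ i1 * q ^ j1 * (p ^ i2 * q ^ j2) * (p ^ (n - i1 - i2) * q ^ (m - j1 - j2))
        = p ^ (i1 + i2 + (n - i1 - i2)) * q ^ (j1 + j2 + (m - j1 - j2)) := by
          rw [pow_add, pow_add, pow_add, pow_add]; ring
      _ = p ^ n * q ^ m := by rw [e1, e2]
  · rintro ⟨t1, t2, t3⟩ ht
    rw [Finset.mem_coe, mem_Tfin hN] at ht
    dsimp only at ht ⊢
    have d1 : t1 ∣ p ^ n * q ^ m := ⟨t2 * t3, by rw [← ht]; ring⟩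
    have d2 : t2 ∣ p ^ n * q ^ m := ⟨t1 * t3, by rw [← ht]; ring⟩
    have d3 : t3 ∣ p ^ n * q ^ m := ⟨t1 * t2, by rw [← ht]; ring⟩
    obtain ⟨i1, hi1, j1, hj1, rfl⟩ := dvd_struct hp hq d1
    obtain ⟨i2, hi2, j2, hj2, rfl⟩ := dvd_struct hp hq d2
    obtain ⟨i3, hi3, j3, hj3, rfl⟩ := dvd_struct hp hq d3
    have hsum : p ^ (i1 + i2 + i3) * q ^ (j1 + j2 + j3) = p ^ n * q ^ m := by
      rw [← ht, pow_add, pow_add, pow_add, pow_add]; ring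
    obtain ⟨hsn, hsm⟩ := eq_exponents hp hq hpq hsum
    simp only [fact_pp hp hq hpq, fact_pq hp hq hpq, Prod.mk.injEq]
    refine ⟨trivial, trivial, ?_⟩
    rw [show n - i1 - i2 = i3 by omega, show m - j1 - j2 = j3 by omega]
  · rintro ⟨⟨i1, i2⟩, j1, j2⟩ hx
    simp only [fact_pp hp hq hpq, fact_pq hp hq hpq]

include hp hq hpq in
lemma Fcard (n m : ℕ) :
    (Ffin (p ^ n * q ^ m)).card =
      ((Finset.range (n + 1)).filter (fun i => 2 * i ≤ n) ×ˢ
        (Finset.range (m + 1)).filter (fun j => 2 * j ≤ m)).card := by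
  have hN : p ^ n * q ^ m ≠ 0 :=
    Nat.mul_ne_zero (pow_ne_zero _ hp.pos.ne') (pow_ne_zero _ hq.pos.ne')
  have hF : ∀ t : ℕ × ℕ × ℕ, t ∈ Ffin (p ^ n * q ^ m) ↔
      t.1 * t.2.1 * t.2.2 = p ^ n * q ^ m ∧ t.1 = t.2.1 := by
    intro t
    unfold Ffin
    rw [Finset.mem_filter, mem_Tfin hN]
  apply Finset.card_nbij'
    (fun t => (t.1.factorization p, t.1.factorization q))
    (fun x => (p ^ x.1 * q ^ x.2, p ^ x.1 * q ^ x.2, p ^ (n - 2 * x.1) * q ^ (m - 2 * x.2)))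
  · rintro ⟨t1, t2, t3⟩ ht
    rw [Finset.mem_coe, hF] at ht
    obtain ⟨ht, heq⟩ := ht
    dsimp only at ht heq ⊢
    subst heq
    have d1 : t1 ∣ p ^ n * q ^ m := ⟨t1 * t3, by rw [← ht]; ring⟩
    obtain ⟨i1, hi1, j1, hj1, rfl⟩ := dvd_struct hp hq d1
    have hdp : p ^ (i1 + i1) ∣ p ^ n * q ^ m := by
      refine dvd_trans ?_ ⟨t3, by rw [← ht]; try ring⟩
      rw [pow_add]
      exact mul_dvd_mul (dvd_mul_right _ _) (dvd_mul_right _ _)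
    have hdq : q ^ (j1 + j1) ∣ p ^ n * q ^ m := by
      refine dvd_trans ?_ ⟨t3, by rw [← ht]; try ring⟩
      rw [pow_add]
      exact mul_dvd_mul (dvd_mul_left _ _) (dvd_mul_left _ _)
    have h1 := pow_le_left hp hq hpq hdp
    have h2 := pow_le_right hp hq hpq hdq
    simp only [Finset.mem_coe, Finset.mem_product, Finset.mem_filter, Finset.mem_range,
      fact_pp hp hq hpq, fact_pq hp hq hpq]
    omega
  · rintro ⟨i, j⟩ hx
    simp only [Finset.mem_coe, Finset.mem_product, Finset.mem_filter, Finset.mem_range] at hx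
    rw [Finset.mem_coe, hF]
    refine ⟨?_, rfl⟩
    dsimp only
    have e1 : i + i + (n - 2 * i) = n := by omega
    have e2 : j + j + (m - 2 * j) = m := by omega
    calc p ^ i * q ^ j * (p ^ i * q ^ j) * (p ^ (n - 2 * i) * q ^ (m - 2 * j))
        = p ^ (i + i + (n - 2 * i)) * q ^ (j + j + (m - 2 * j)) := by
          rw [pow_add, pow_add, pow_add, pow_add]; ring
      _ = p ^ n * q ^ m := by rw [e1, e2]
  · rintro ⟨t1, t2, t3⟩ ht
    rw [Finset.mem_coe, hF] at ht
    obtain ⟨ht, heq⟩ := ht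
    dsimp only at ht heq ⊢
    subst heq
    have d1 : t1 ∣ p ^ n * q ^ m := ⟨t1 * t3, by rw [← ht]; ring⟩
    have d3 : t3 ∣ p ^ n * q ^ m := ⟨t1 * t1, by rw [← ht]; ring⟩
    obtain ⟨i1, hi1, j1, hj1, rfl⟩ := dvd_struct hp hq d1
    obtain ⟨i3, hi3, j3, hj3, rfl⟩ := dvd_struct hp hq d3
    have hsum : p ^ (i1 + i1 + i3) * q ^ (j1 + j1 + j3) = p ^ n * q ^ m := by
      rw [← ht, pow_add, pow_add, pow_add, pow_add]; ring
    obtain ⟨hsn, hsm⟩ := eq_exponents hp hq hpq hsum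
    simp only [fact_pp hp hq hpq, fact_pq hp hq hpq, Prod.mk.injEq]
    refine ⟨trivial, trivial, ?_⟩
    rw [show n - 2 * i1 = i3 by omega, show m - 2 * j1 = j3 by omega]
  · rintro ⟨i, j⟩ hx
    simp only [fact_pp hp hq hpq, fact_pq hp hq hpq]

end

lemma Ecard (n : ℕ) :
    2 * ((Finset.range (n + 1) ×ˢ Finset.range (n + 1)).filter
      (fun x : ℕ × ℕ => x.1 + x.2 ≤ n)).card = (n + 1) * (n + 2) := by
  set E := (Finset.range (n + 1) ×ˢ Finset.range (n + 1)).filter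
      (fun x : ℕ × ℕ => x.1 + x.2 ≤ n) with hE
  have hmap : ∀ x ∈ E, x.1 ∈ Finset.range (n + 1) := by
    rintro ⟨x1, x2⟩ hx
    rw [hE, Finset.mem_filter, Finset.mem_product] at hx
    exact hx.1.1
  have h1 : E.card = ∑ i ∈ Finset.range (n + 1), (E.filter (fun x => x.1 = i)).card :=
    Finset.card_eq_sum_card_fiberwise hmap
  have h2 : ∀ i ∈ Finset.range (n + 1),
      (E.filter (fun x => x.1 = i)).card = n + 1 - i := by
    intro i hi
    rw [Finset.mem_range] at hi
    have : E.filter (fun x => x.1 = i) = {i} ×ˢ Finset.range (n + 1 - i) := by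
      ext ⟨x1, x2⟩
      rw [Finset.mem_filter, hE, Finset.mem_filter, Finset.mem_product]
      simp only [Finset.mem_product, Finset.mem_singleton, Finset.mem_range]
      omega
    rw [this, Finset.card_product, Finset.card_singleton, Finset.card_range, one_mul]
  rw [h1, Finset.sum_congr rfl h2]
  have h3 : ∑ i ∈ Finset.range (n + 1), (n + 1 - i) =
      (∑ i ∈ Finset.range (n + 1), i) + (n + 1) := by
    rw [← Finset.sum_range_reflect (fun i => n + 1 - i) (n + 1)]
    have : ∀ i ∈ Finset.range (n + 1), n + 1 - (n + 1 - 1 - i) = i + 1 := by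
      intro i hi; rw [Finset.mem_range] at hi; omega
    rw [Finset.sum_congr rfl this, Finset.sum_add_distrib, Finset.sum_const,
      Finset.card_range, smul_eq_mul, mul_one]
  have h4 := Finset.sum_range_id_mul_two (n + 1)
  calc 2 * ∑ i ∈ Finset.range (n + 1), (n + 1 - i)
      = (∑ i ∈ Finset.range (n + 1), i) * 2 + 2 * (n + 1) := by rw [h3]; ring
    _ = (n + 1) * n + 2 * (n + 1) := by rw [h4]; simp
    _ = (n + 1) * (n + 2) := by ring

lemma Gcard {n : ℕ} (hn : n % 2 = 0) :
    ((Finset.range (n + 1)).filter (fun i => 2 * i ≤ n)).card = n / 2 + 1 := by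
  have : (Finset.range (n + 1)).filter (fun i => 2 * i ≤ n) = Finset.range (n / 2 + 1) := by
    ext i
    simp only [Finset.mem_filter, Finset.mem_range]
    omega
  rw [this, Finset.card_range]

theorem cuboid_count_two_primes (p q n m : ℕ) (hp : p.Prime) (hq : q.Prime)
    (hpq : p ≠ q) (hn : 0 < n) (hm : 0 < m)
    (hnmod : n % 6 = 2 ∨ n % 6 = 4) (hmmod : m % 6 = 0 ∨ m % 6 = 2 ∨ m % 6 = 4) :
    (cuboidCount (p ^ n * q ^ m) : ℚ) = ((n : ℚ) + 2) * ((m : ℚ) + 2) * ((n : ℚ) * m + n + m + 4) / 24 := by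
  set N := p ^ n * q ^ m with hNdef
  have hN : N ≠ 0 := Nat.mul_ne_zero (pow_ne_zero _ hp.pos.ne') (pow_ne_zero _ hq.pos.ne')
  have hcube : ∀ x : ℕ, x * x * x ≠ N := by
    intro x hx
    have hd : x ∣ N := ⟨x * x, by rw [← hx]; ring⟩
    obtain ⟨i, hi, j, hj, rfl⟩ := dvd_struct hp hq hd
    have hx' : p ^ i * q ^ j * (p ^ i * q ^ j) * (p ^ i * q ^ j) = p ^ n * q ^ m := hx
    have hsum : p ^ (i + i + i) * q ^ (j + j + j) = p ^ n * q ^ m := by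
      rw [← hx', pow_add, pow_add, pow_add, pow_add]; ring
    obtain ⟨hsn, _⟩ := eq_exponents hp hq hpq hsum
    omega
  have hset : {t : ℕ × ℕ × ℕ | 0 < t.1 ∧ t.1 ≤ t.2.1 ∧ t.2.1 ≤ t.2.2 ∧ t.1 * t.2.1 * t.2.2 = N}
      = ↑(Sfin N) := by
    ext t
    simp only [Set.mem_setOf_eq, Finset.coe_filter, Sfin, Set.mem_setOf_eq, mem_Tfin hN]
    constructor
    · rintro ⟨h1, h2, h3, h4⟩; exact ⟨h4, h2, h3⟩
    · rintro ⟨h4, h2, h3⟩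
      refine ⟨?_, h2, h3, h4⟩
      rcases Nat.eq_zero_or_pos t.1 with h0 | h0
      · exfalso; apply hN; rw [← h4, h0]; ring
      · exact h0
  have hcc : cuboidCount N = (Sfin N).card := by
    rw [cuboidCount, hset, Set.ncard_coe_finset]
  -- even exponents
  obtain ⟨a, rfl⟩ : ∃ a, n = 2 * a := ⟨n / 2, by omega⟩
  obtain ⟨b, rfl⟩ : ∃ b, m = 2 * b := ⟨m / 2, by omega⟩
  have hTc := Tcard hp hq hpq (2 * a) (2 * b)
  rw [Finset.card_product] at hTc
  have hEa := Ecard (2 * a)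
  have hEb := Ecard (2 * b)
  have hFc := Fcard hp hq hpq (2 * a) (2 * b)
  rw [Finset.card_product, Gcard (by omega), Gcard (by omega)] at hFc
  have hEa' : ((Finset.range (2 * a + 1) ×ˢ Finset.range (2 * a + 1)).filter
      (fun x : ℕ × ℕ => x.1 + x.2 ≤ 2 * a)).card = (2 * a + 1) * (a + 1) := by
    have h2 : (2 * a + 1) * (2 * a + 2) = 2 * ((2 * a + 1) * (a + 1)) := by ring
    omega
  have hEb' : ((Finset.range (2 * b + 1) ×ˢ Finset.range (2 * b + 1)).filter
      (fun x : ℕ × ℕ => x.1 + x.2 ≤ 2 * b)).card = (2 * b + 1) * (b + 1) := by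
    have h2 : (2 * b + 1) * (2 * b + 2) = 2 * ((2 * b + 1) * (b + 1)) := by ring
    omega
  have hB := burnside hN hcube
  rw [hTc, hEa', hEb', hFc] at hB
  have hdiv : (2 * a) / 2 = a := by omega
  have hdiv' : (2 * b) / 2 = b := by omega
  rw [hdiv, hdiv'] at hB
  -- hB : (2a+1)(a+1) * ((2b+1)(b+1)) + 3 * ((a+1)*(b+1)) = 6 * (Sfin N).card
  have key : (6 : ℚ) * ((Sfin N).card : ℚ) =
      ((2 * a + 1) * (a + 1)) * ((2 * b + 1) * (b + 1)) + 3 * ((a + 1) * (b + 1)) := by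
    exact_mod_cast hB.symm
  rw [hcc]
  push_cast
  field_simp
  linear_combination 4 * key
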